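/- Let H ⊆ 𝔽₄^n, n=(4^k−1)/3, be the Hamming code defined as the kernel of the check matrix P whose columns are all vectors in 𝔽₄^k with first nonzero entry 1, listed in inverse lexicographic order. If c̄ ∈ H, ē ∈ E'' (the span of (1,1,1,1) and (0,1,ξ,ξ²)), and 0 ≤ j < (n−1)/4, then the word b̄ obtained from c̄ by adding ē to coordinates 4j+1,…,4j+4 is also in H. -/
import Mathlib


theorem stmt_18 (k n : ℕ) (hk : 0 < k) (hn : 3 * n = 4 ^ k - 1)
    (ξ : GaloisField 2 2) (hξ0 : ξ ≠ 0) (hξ1 : ξ ≠ 1)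
    (P : Matrix (Fin k) (Fin n) (GaloisField 2 2))
    (hlast : ∀ j : ℕ, ∀ hjn : 4 * j + 4 ≤ n - 1, ∀ t : Fin 4,
      P ⟨k - 1, by omega⟩ ⟨4 * j + t, by have := t.isLt; omega⟩ =
        ![ξ^2, ξ, 1, 0] t)
    (hrows : ∀ j : ℕ, ∀ hjn : 4 * j + 4 ≤ n - 1, ∀ i : Fin k, (i : ℕ) < k - 1 →
      ∃ a : GaloisField 2 2, ∀ t : Fin 4,
        P i ⟨4 * j + t, by have := t.isLt; omega⟩ = a)
    (c : Fin n → GaloisField 2 2)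
    (hc : ∀ i : Fin k, ∑ t, P i t * c t = 0)
    (e : Fin 4 → GaloisField 2 2)
    (he : e ∈ Submodule.span (GaloisField 2 2)
      ({![1,1,1,1], ![0,1,ξ,ξ^2]} : Set (Fin 4 → GaloisField 2 2)))
    (j : ℕ) (hj : 4 * j + 4 ≤ n - 1)
    (b : Fin n → GaloisField 2 2)
    (hb : ∀ t : Fin n, b t =
      if h : 4 * j ≤ (t : ℕ) ∧ (t : ℕ) < 4 * j + 4 then
        c t + e ⟨(t : ℕ) - 4 * j, by omega⟩
      else c t) :
    ∀ i : Fin k, ∑ t, P i t * b t = 0 := by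
  haveI : Fact (Nat.Prime 2) := ⟨by norm_num⟩
  haveI : Fintype (GaloisField 2 2) := Fintype.ofFinite _
  -- ξ² + ξ + 1 = 0
  have hcard : Fintype.card (GaloisField 2 2) = 2 ^ 2 := by
    rw [← Nat.card_eq_fintype_card]
    exact GaloisField.card 2 2 (by norm_num)
  have hpow : ξ ^ 4 = ξ := by
    have h := FiniteField.pow_card ξ
    rw [hcard] at h
    norm_num at h
    exact h
  have hξ : ξ ^ 2 + ξ + 1 = 0 := by
    have h : ξ * ((ξ - 1) * (ξ ^ 2 + ξ + 1)) = 0 := by linear_combination hpow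
    rcases mul_eq_zero.mp h with h | h
    · exact absurd h hξ0
    rcases mul_eq_zero.mp h with h | h
    · exact absurd (sub_eq_zero.mp h) hξ1
    · exact h
  have h2 : (2 : GaloisField 2 2) = 0 := by
    have := CharP.cast_eq_zero (GaloisField 2 2) 2
    exact_mod_cast this
  obtain ⟨α, β, hαβ⟩ := Submodule.mem_span_pair.mp he
  have he0 : e 0 = α := by rw [← hαβ]; simp
  have he1 : e 1 = α + β := by rw [← hαβ]; simp
  have he2 : e 2 = α + β * ξ := by
    rw [← hαβ]
    simp [Pi.add_apply, Pi.smul_apply, smul_eq_mul]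
  have he3 : e 3 = α + β * ξ ^ 2 := by
    rw [← hαβ]
    simp [Pi.add_apply, Pi.smul_apply, smul_eq_mul]
  intro i
  have hfn : ∀ s : Fin 4, 4 * j + (s : ℕ) < n := fun s => by have := s.isLt; omega
  set f : Fin 4 → Fin n := fun s => ⟨4 * j + s, hfn s⟩ with hf
  have hfinj : Function.Injective f := by
    intro a b hab
    have : 4 * j + (a : ℕ) = 4 * j + (b : ℕ) := congrArg Fin.val hab
    exact Fin.ext (by omega)
  set g : Fin n → GaloisField 2 2 := fun t =>
    if h : 4 * j ≤ (t : ℕ) ∧ (t : ℕ) < 4 * j + 4 then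
      P i t * e ⟨(t : ℕ) - 4 * j, by omega⟩ else 0 with hg
  have hgf : ∀ s : Fin 4, g (f s) = P i (f s) * e s := by
    intro s
    have hs := s.isLt
    simp only [hg]
    rw [dif_pos (show 4 * j ≤ 4 * j + (s : ℕ) ∧ 4 * j + (s : ℕ) < 4 * j + 4 from
      ⟨by omega, by omega⟩)]
    congr 1
    congr 1
    exact Fin.ext (by simp [hf])
  have hsum : ∑ t, P i t * b t = ∑ t, P i t * c t + ∑ s : Fin 4, P i (f s) * e s := by
    have h1 : ∀ t : Fin n, P i t * b t = P i t * c t + g t := by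
      intro t
      rw [hb t]
      simp only [hg]
      by_cases h : 4 * j ≤ (t : ℕ) ∧ (t : ℕ) < 4 * j + 4
      · rw [dif_pos h, dif_pos h]; ring
      · rw [dif_neg h, dif_neg h]; ring
    rw [Finset.sum_congr rfl (fun t _ => h1 t), Finset.sum_add_distrib]
    congr 1
    calc ∑ t : Fin n, g t = ∑ t ∈ Finset.univ.image f, g t := by
          symm
          apply Finset.sum_subset (Finset.subset_univ _)
          intro t _ ht
          simp only [hg]
          rw [dif_neg]
          intro hcond
          apply ht
          simp only [Finset.mem_image, Finset.mem_univ, true_and]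
          exact ⟨⟨(t : ℕ) - 4 * j, by omega⟩, Fin.ext (by simp [hf]; omega)⟩
      _ = ∑ s : Fin 4, g (f s) :=
          Finset.sum_image (fun a _ b _ hab => hfinj hab)
      _ = ∑ s : Fin 4, P i (f s) * e s := Finset.sum_congr rfl (fun s _ => hgf s)
  rw [hsum, hc i, zero_add]
  by_cases hi : (i : ℕ) < k - 1
  · obtain ⟨a, ha⟩ := hrows j hj i hi
    calc ∑ s : Fin 4, P i (f s) * e s = ∑ s : Fin 4, a * e s := by
          apply Finset.sum_congr rfl
          intro s _
          rw [show P i (f s) = a from ha s]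
      _ = 0 := by
          rw [Fin.sum_univ_four, he0, he1, he2, he3]
          linear_combination a * β * hξ + 2 * a * α * h2
  · have hik : (i : ℕ) = k - 1 := by have := i.isLt; omega
    have hieq : i = ⟨k - 1, by omega⟩ := Fin.ext hik
    calc ∑ s : Fin 4, P i (f s) * e s = ∑ s : Fin 4, ![ξ^2, ξ, 1, 0] s * e s := by
          apply Finset.sum_congr rfl
          intro s _
          rw [hieq]
          rw [show P ⟨k-1, by omega⟩ (f s) = ![ξ^2, ξ, 1, 0] s from hlast j hj s]
      _ = 0 := by
          rw [Fin.sum_univ_four, he0, he1, he2, he3]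
          simp only [Matrix.cons_val_zero, Matrix.cons_val_one, Matrix.head_cons,
            Matrix.cons_val_two, Matrix.tail_cons, Matrix.cons_val_three]
          linear_combination α * hξ + β * ξ * h2
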